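/- A finite simple graph admits a perfect elimination ordering (an ordering of the vertices such that for every vertex v, the neighbors of v among the vertices less than or equal to v that precede v form a clique in the induced subgraph on vertices ≤ v) if and only if the graph is chordal (every cycle of length at least 4 has a chord). -/

import Mathlib

open SimpleGraph

/-- A cycle (walk) in a graph has a chord if two of its vertices are adjacent in the graph
but the corresponding edge is not an edge of the cycle. -/
def SimpleGraph.Walk.HasChord {V : Type*} {G : SimpleGraph V} {v : V} (c : G.Walk v v) : Prop :=
  ∃ a b : V, a ∈ c.support ∧ b ∈ c.support ∧ G.Adj a b ∧ s(a, b) ∉ c.edges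

/-- A graph is chordal if every cycle with more than three vertices has a chord. -/
def SimpleGraph.IsChordal {V : Type*} (G : SimpleGraph V) : Prop :=
  ∀ (v : V) (c : G.Walk v v), c.IsCycle → 3 < c.length → c.HasChord

namespace SimpleGraph

namespace Walk

variable {V : Type*} {G : SimpleGraph V}
variable {V : Type*} {G : SimpleGraph V}

lemma edges_eq_of_length_one {x y : V} (r : G.Walk x y) (h : r.length = 1) :
    r.edges = [s(x, y)] := by
  cases r with
  | nil => simp at h
  | cons ha q =>
    cases q with
    | nil => simp
    | cons hb q' => simp [Walk.length_cons] at h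

lemma exists_cons_of_mem_edges_fst {u v x : V} {p : G.Walk u v} (hp : p.IsPath)
    (h : s(u, x) ∈ p.edges) : ∃ (ha : G.Adj u x) (q : G.Walk x v), p = Walk.cons ha q := by
  cases p with
  | nil => simp at h
  | cons ha q =>
    rename_i b
    rw [Walk.edges_cons, List.mem_cons] at h
    rcases h with h | h
    · rcases Sym2.eq_iff.mp h with ⟨-, rfl⟩ | ⟨h1, h2⟩
      · exact ⟨ha, q, rfl⟩
      · exact absurd h1 ha.ne
    · exfalso
      have := Walk.fst_mem_support_of_mem_edges q h
      rw [Walk.cons_isPath_iff] at hp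
      exact hp.2 this

/-- key minimality lemma: in a length-minimal walk among walks with a support
condition, any two adjacent support vertices are joined by an edge of the walk. -/
lemma min_walk_mem_edges {s t : V} (P : V → Prop) {p : G.Walk s t}
    (hP : ∀ z ∈ p.support, P z)
    (hmin : ∀ q : G.Walk s t, (∀ z ∈ q.support, P z) → p.length ≤ q.length)
    {x y : V} (hx : x ∈ p.support) (hy : y ∈ p.support) (hadj : G.Adj x y) :
    s(x, y) ∈ p.edges := by
  obtain ⟨q, r, rfl⟩ := Walk.mem_support_iff_exists_append.mp hx
  rw [Walk.mem_support_append_iff] at hy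
  rcases hy with hy | hy
  · -- y in the first part q : s → x
    obtain ⟨q1, q2, rfl⟩ := Walk.mem_support_iff_exists_append.mp hy
    -- candidate : q1.append (cons hadj.symm r)
    have hc : ∀ z ∈ (q1.append (Walk.cons hadj.symm r)).support, P z := by
      intro z hz
      rw [Walk.mem_support_append_iff] at hz
      apply hP
      rcases hz with hz | hz
      · rw [Walk.mem_support_append_iff]
        left; rw [Walk.mem_support_append_iff]; left; exact hz
      · rw [Walk.support_cons, List.mem_cons] at hz
        rcases hz with hz' | hz
        · subst hz'
          rw [Walk.mem_support_append_iff]; left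
          rw [Walk.mem_support_append_iff]; left
          exact Walk.end_mem_support _
        · rw [Walk.mem_support_append_iff]; right; exact hz
    have hlen := hmin _ hc
    simp only [Walk.length_append, Walk.length_cons] at hlen
    -- lengths : q1 + q2 + r ≤ q1 + (r + 1)
    have hq2 : q2.length ≤ 1 := by omega
    interval_cases h : q2.length
    · exact absurd (Walk.eq_of_length_eq_zero h) hadj.ne'
    · have he := q2.edges_eq_of_length_one h
      have : s(y, x) ∈ (q1.append q2).edges := by
        rw [Walk.edges_append, List.mem_append]
        right; rw [he]; simp
      rw [Walk.edges_append, List.mem_append]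
      left
      rwa [Sym2.eq_swap] at this
  · -- y in the second part r : x → t
    obtain ⟨r1, r2, rfl⟩ := Walk.mem_support_iff_exists_append.mp hy
    have hc : ∀ z ∈ (q.append (Walk.cons hadj r2)).support, P z := by
      intro z hz
      rw [Walk.mem_support_append_iff] at hz
      apply hP
      rcases hz with hz | hz
      · rw [Walk.mem_support_append_iff]; left; exact hz
      · rw [Walk.support_cons, List.mem_cons] at hz
        rcases hz with hz' | hz
        · subst hz'
          rw [Walk.mem_support_append_iff]; left
          exact Walk.end_mem_support _
        · rw [Walk.mem_support_append_iff]; right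
          rw [Walk.mem_support_append_iff]; right; exact hz
    have hlen := hmin _ hc
    simp only [Walk.length_append, Walk.length_cons] at hlen
    have hr1 : r1.length ≤ 1 := by omega
    interval_cases h : r1.length
    · exact absurd (Walk.eq_of_length_eq_zero h) hadj.ne
    · have he := r1.edges_eq_of_length_one h
      rw [Walk.edges_append, List.mem_append]
      right
      rw [Walk.edges_append, List.mem_append]
      left; rw [he]; simp

end Walk

variable {V : Type*} {G : SimpleGraph V}



variable {V : Type*} {G : SimpleGraph V}

/-- A vertex is simplicial if its neighborhood is a clique. -/
def Simplicial (G : SimpleGraph V) (x : V) : Prop :=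
  ∀ u w : V, G.Adj u x → G.Adj w x → u ≠ w → G.Adj u w

/-- There is a walk from `x` to `y` avoiding the set `S`. -/
def Avoid (G : SimpleGraph V) (S : Set V) (x y : V) : Prop :=
  ∃ p : G.Walk x y, ∀ z ∈ p.support, z ∉ S

lemma Avoid.notMem_left {S : Set V} {x y : V} (h : G.Avoid S x y) : x ∉ S := by
  obtain ⟨p, hp⟩ := h
  exact hp x (Walk.start_mem_support p)

lemma Avoid.notMem_right {S : Set V} {x y : V} (h : G.Avoid S x y) : y ∉ S := by
  obtain ⟨p, hp⟩ := h
  exact hp y (Walk.end_mem_support p)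

lemma Avoid.refl {S : Set V} {x : V} (h : x ∉ S) : G.Avoid S x x :=
  ⟨Walk.nil, by simpa using h⟩

lemma Avoid.symm {S : Set V} {x y : V} (h : G.Avoid S x y) : G.Avoid S y x := by
  obtain ⟨p, hp⟩ := h
  exact ⟨p.reverse, fun z hz => hp z (by rwa [Walk.support_reverse, List.mem_reverse] at hz)⟩

lemma Avoid.trans {S : Set V} {x y z : V} (h : G.Avoid S x y) (h' : G.Avoid S y z) :
    G.Avoid S x z := by
  obtain ⟨p, hp⟩ := h
  obtain ⟨q, hq⟩ := h'
  refine ⟨p.append q, fun w hw => ?_⟩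
  rw [Walk.mem_support_append_iff] at hw
  rcases hw with hw | hw
  · exact hp w hw
  · exact hq w hw

lemma Avoid.step {S : Set V} {x y z : V} (h : G.Avoid S x y) (ha : G.Adj y z) (hz : z ∉ S) :
    G.Avoid S x z := by
  refine h.trans ⟨Walk.cons ha Walk.nil, ?_⟩
  intro w hw
  simp only [Walk.support_cons, Walk.support_nil, List.mem_cons, List.mem_singleton] at hw
  rcases hw with rfl | rfl | h'
  · exact h.notMem_right
  · exact hz
  · exact absurd h' (by simp)

lemma Avoid.of_mem_support {S : Set V} {x y z : V} {p : G.Walk x y}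
    (hp : ∀ w ∈ p.support, w ∉ S) (hz : z ∈ p.support) : G.Avoid S x z := by
  classical
  exact ⟨p.takeUntil z hz, fun w hw => hp w (Walk.support_takeUntil_subset p hz hw)⟩

/-- Among walks whose support satisfies `P`, there is a length-minimal one that is a path. -/
lemma exists_min_path {s t : V} (P : V → Prop)
    (h : ∃ p : G.Walk s t, ∀ z ∈ p.support, P z) :
    ∃ p : G.Walk s t, (∀ z ∈ p.support, P z) ∧ p.IsPath ∧
      ∀ q : G.Walk s t, (∀ z ∈ q.support, P z) → p.length ≤ q.length := by
  classical
  obtain ⟨p0, hp0⟩ := h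
  have hne : ∃ n, ∃ p : G.Walk s t, (∀ z ∈ p.support, P z) ∧ p.length = n :=
    ⟨p0.length, p0, hp0, rfl⟩
  obtain ⟨p, hp, hpl⟩ := Nat.find_spec hne
  refine ⟨p.bypass, fun z hz => hp z (Walk.support_bypass_subset p hz),
    Walk.bypass_isPath p, fun q hq => ?_⟩
  have h1 : p.bypass.length ≤ p.length := Walk.length_bypass_le p
  have h2 : Nat.find hne ≤ q.length := Nat.find_le ⟨q, hq, rfl⟩
  omega




lemma IsChordal.induce (h : G.IsChordal) (U : Set V) : (G.induce U).IsChordal := by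
  intro v c hc hlen
  classical
  let f : G.induce U ↪g G := Embedding.induce U
  have hinj : Function.Injective f := f.injective
  have hc' : (c.map f.toHom).IsCycle := hc.map hinj
  have hlen' : 3 < (c.map f.toHom).length := by rwa [Walk.length_map]
  obtain ⟨a, b, ha, hb, hab, hne⟩ := h (f v) (c.map f.toHom) hc' hlen'
  rw [Walk.support_map, List.mem_map] at ha hb
  obtain ⟨a0, ha0, rfl⟩ := ha
  obtain ⟨b0, hb0, rfl⟩ := hb
  refine ⟨a0, b0, ha0, hb0, ?_, ?_⟩
  · exact hab
  · intro hmem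
    apply hne
    rw [Walk.edges_map, List.mem_map]
    exact ⟨s(a0, b0), hmem, rfl⟩

lemma sep_neighbor {a b : V} {S : Finset V} (hSa : a ∉ S) (hSb : b ∉ S)
    (hsep : ¬ G.Avoid ↑S a b)
    (hmin : ∀ T : Finset V, a ∉ T → b ∉ T → ¬ G.Avoid ↑T a b → S.card ≤ T.card)
    {s0 : V} (hs0 : s0 ∈ S) :
    ∃ y, G.Avoid ↑S a y ∧ G.Adj s0 y := by
  classical
  by_contra hno
  push_neg at hno
  have hsep' : ¬ G.Avoid ↑(S.erase s0) a b := by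
    rintro ⟨p, hp⟩
    have hp' : ∀ z ∈ p.bypass.support, z ∉ (↑(S.erase s0) : Set V) :=
      fun z hz => hp z (Walk.support_bypass_subset p hz)
    by_cases hs : s0 ∈ p.bypass.support
    · have hq : (p.bypass.takeUntil s0 hs).IsPath := (Walk.bypass_isPath p).takeUntil hs
      cases hE : (p.bypass.takeUntil s0 hs).reverse with
      | nil => exact hSa hs0
      | cons h2 r =>
        rename_i y
        have hqr : (p.bypass.takeUntil s0 hs).reverse.IsPath := hq.reverse
        rw [hE, Walk.cons_isPath_iff] at hqr
        have hyA : G.Avoid ↑S a y := by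
          refine ⟨r.reverse, fun z hz => ?_⟩
          rw [Walk.support_reverse, List.mem_reverse] at hz
          have hzq : z ∈ (p.bypass.takeUntil s0 hs).support := by
            have h3 : z ∈ (p.bypass.takeUntil s0 hs).reverse.support := by
              rw [hE, Walk.support_cons]; exact List.mem_cons_of_mem _ hz
            rwa [Walk.support_reverse, List.mem_reverse] at h3
          have hz1 : z ∉ (↑(S.erase s0) : Set V) :=
            hp' z (Walk.support_takeUntil_subset _ hs hzq)
          have hz2 : z ≠ s0 := fun hzs => hqr.2 (hzs ▸ hz)
          intro hzS
          exact hz1 (by simp [Finset.mem_coe, Finset.mem_erase, hz2, hzS])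
        exact hno y hyA h2
    · apply hsep
      refine ⟨p.bypass, fun z hz hzS => ?_⟩
      have hz2 : z ≠ s0 := fun hzs => hs (hzs ▸ hz)
      exact hp' z hz (by simp [Finset.mem_coe, Finset.mem_erase, hz2, hzS])
  have hcard := hmin (S.erase s0) (fun h => hSa (Finset.mem_of_mem_erase h))
    (fun h => hSb (Finset.mem_of_mem_erase h)) hsep'
  rw [Finset.card_erase_of_mem hs0] at hcard
  have hpos : 0 < S.card := Finset.card_pos.mpr ⟨s0, hs0⟩
  omega

lemma sep_clique (hch : G.IsChordal) {a b : V} {S : Finset V}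
    (hSa : a ∉ S) (hSb : b ∉ S) (hsep : ¬ G.Avoid ↑S a b)
    (hmin : ∀ T : Finset V, a ∉ T → b ∉ T → ¬ G.Avoid ↑T a b → S.card ≤ T.card)
    {s0 t0 : V} (hs0 : s0 ∈ S) (ht0 : t0 ∈ S) (hnest : s0 ≠ t0) : G.Adj s0 t0 := by
  classical
  by_contra hnadj
  have hsep2 : ¬ G.Avoid ↑S b a := fun h => hsep h.symm
  have hmin2 : ∀ T : Finset V, b ∉ T → a ∉ T → ¬ G.Avoid ↑T b a → S.card ≤ T.card :=
    fun T h1 h2 h3 => hmin T h2 h1 fun h => h3 h.symm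
  have hABdisj : ∀ z, G.Avoid ↑S a z → G.Avoid ↑S b z → False :=
    fun z h1 h2 => hsep (h1.trans h2.symm)
  -- walks through each side
  have hexA : ∃ p : G.Walk s0 t0, ∀ z ∈ p.support, z = s0 ∨ z = t0 ∨ G.Avoid ↑S a z := by
    obtain ⟨xa, hxa, hxadj⟩ := sep_neighbor hSa hSb hsep hmin hs0
    obtain ⟨ya, hya, hyadj⟩ := sep_neighbor hSa hSb hsep hmin ht0
    obtain ⟨pxa, hpxa⟩ := hxa.symm
    obtain ⟨pya, hpya⟩ := hya
    refine ⟨Walk.cons hxadj ((pxa.append pya).append (Walk.cons hyadj.symm Walk.nil)),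
      fun z hz => ?_⟩
    rw [Walk.support_cons, List.mem_cons] at hz
    rcases hz with rfl | hz
    · exact Or.inl rfl
    rw [Walk.mem_support_append_iff] at hz
    rcases hz with hz | hz
    · rw [Walk.mem_support_append_iff] at hz
      right; right
      rcases hz with hz | hz
      · exact hxa.trans (Avoid.of_mem_support hpxa hz)
      · exact Avoid.of_mem_support hpya hz
    · simp only [Walk.support_cons, Walk.support_nil, List.mem_cons,
        List.mem_singleton] at hz
      rcases hz with rfl | rfl | h'
      · exact Or.inr (Or.inr ⟨pya, hpya⟩)
      · exact Or.inr (Or.inl rfl)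
      · exact absurd h' (by simp)
  have hexB : ∃ p : G.Walk s0 t0, ∀ z ∈ p.support, z = s0 ∨ z = t0 ∨ G.Avoid ↑S b z := by
    obtain ⟨xb, hxb, hxadj⟩ := sep_neighbor hSb hSa hsep2 hmin2 hs0
    obtain ⟨yb, hyb, hyadj⟩ := sep_neighbor hSb hSa hsep2 hmin2 ht0
    obtain ⟨pxb, hpxb⟩ := hxb.symm
    obtain ⟨pyb, hpyb⟩ := hyb
    refine ⟨Walk.cons hxadj ((pxb.append pyb).append (Walk.cons hyadj.symm Walk.nil)),
      fun z hz => ?_⟩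
    rw [Walk.support_cons, List.mem_cons] at hz
    rcases hz with rfl | hz
    · exact Or.inl rfl
    rw [Walk.mem_support_append_iff] at hz
    rcases hz with hz | hz
    · rw [Walk.mem_support_append_iff] at hz
      right; right
      rcases hz with hz | hz
      · exact hxb.trans (Avoid.of_mem_support hpxb hz)
      · exact Avoid.of_mem_support hpyb hz
    · simp only [Walk.support_cons, Walk.support_nil, List.mem_cons,
        List.mem_singleton] at hz
      rcases hz with rfl | rfl | h'
      · exact Or.inr (Or.inr ⟨pyb, hpyb⟩)
      · exact Or.inr (Or.inl rfl)
      · exact absurd h' (by simp)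
  obtain ⟨pA, hPA, hpathA, hminA⟩ := exists_min_path _ hexA
  obtain ⟨pB, hPB, hpathB, hminB⟩ := exists_min_path _ hexB
  have hlen2 : ∀ p : G.Walk s0 t0, 2 ≤ p.length ∨ p.length = 0 ∨ p.length = 1 := by
    intro p; omega
  have hlenA : 2 ≤ pA.length := by
    rcases hlen2 pA with h | h | h
    · exact h
    · exact absurd (Walk.eq_of_length_eq_zero h) hnest
    · exact absurd (pA.adj_of_mem_edges
        (by rw [pA.edges_eq_of_length_one h]; simp)) hnadj
  have hlenB : 2 ≤ pB.length := by
    rcases hlen2 pB with h | h | h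
    · exact h
    · exact absurd (Walk.eq_of_length_eq_zero h) hnest
    · exact absurd (pB.adj_of_mem_edges
        (by rw [pB.edges_eq_of_length_one h]; simp)) hnadj
  obtain ⟨a1, h1, pa', rfl⟩ : ∃ (a1 : V) (h1 : G.Adj s0 a1) (pa' : G.Walk a1 t0),
      pA = Walk.cons h1 pa' := by
    cases pA with
    | nil => exact absurd rfl hnest
    | cons h q => exact ⟨_, h, q, rfl⟩
  have hpa' : pa'.IsPath ∧ s0 ∉ pa'.support := (Walk.cons_isPath_iff _ _).mp hpathA
  have hlenpa : 1 ≤ pa'.length := by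
    rw [Walk.length_cons] at hlenA; omega
  have ha1t : a1 ≠ t0 := by
    rintro rfl
    have := (Walk.isPath_iff_eq_nil).mp hpa'.1
    rw [this] at hlenpa
    simp at hlenpa
  have ha1mem : a1 ∈ pa'.support := Walk.start_mem_support pa'
  have ha1A : G.Avoid ↑S a a1 := by
    rcases hPA a1 (by rw [Walk.support_cons]; exact List.mem_cons_of_mem _ ha1mem) with
      h | h | h
    · exact absurd (h ▸ ha1mem) hpa'.2
    · exact absurd h ha1t
    · exact h
  have hPBrev : pB.reverse.IsPath := hpathB.reverse
  have ht0tail : t0 ∉ pB.reverse.support.tail := by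
    have hnd := hPBrev.support_nodup
    rw [Walk.support_eq_cons] at hnd
    exact (List.nodup_cons.mp hnd).1
  -- the cycle
  have hceq : (Walk.cons h1 pa').append pB.reverse
      = Walk.cons h1 (pa'.append pB.reverse) := by simp
  have hcyc : ((Walk.cons h1 pa').append pB.reverse).IsCycle := by
    rw [hceq, Walk.cons_isCycle_iff]
    constructor
    · rw [Walk.isPath_def, Walk.support_append, List.nodup_append]
      refine ⟨hpa'.1.support_nodup, ?_, ?_⟩
      · exact hPBrev.support_nodup.sublist (List.tail_sublist _)
      · intro z hz z' hz' hzz'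
        subst hzz'
        have hz2 : z ∈ pB.reverse.support := List.mem_of_mem_tail hz'
        rw [Walk.support_reverse, List.mem_reverse] at hz2
        have hzne_t0 : z ≠ t0 := fun h => ht0tail (h ▸ hz')
        have hzne_s0 : z ≠ s0 := fun h => hpa'.2 (h ▸ hz)
        have hzA : G.Avoid ↑S a z := by
          rcases hPA z (by rw [Walk.support_cons]; exact List.mem_cons_of_mem _ hz) with
            h | h | h
          · exact absurd h hzne_s0
          · exact absurd h hzne_t0
          · exact h
        have hzB : G.Avoid ↑S b z := by
          rcases hPB z hz2 with h | h | h
          · exact absurd h hzne_s0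
          · exact absurd h hzne_t0
          · exact h
        exact hABdisj z hzA hzB
    · intro hmem
      rw [Walk.edges_append, List.mem_append] at hmem
      rcases hmem with hmem | hmem
      · exact hpa'.2 (Walk.fst_mem_support_of_mem_edges pa' hmem)
      · rw [Walk.edges_reverse, List.mem_reverse] at hmem
        have := Walk.snd_mem_support_of_mem_edges pB hmem
        rcases hPB a1 this with h | h | h
        · exact h1.ne' h
        · exact ha1t h
        · exact hABdisj a1 ha1A h
  have hclen : 3 < ((Walk.cons h1 pa').append pB.reverse).length := by
    rw [Walk.length_append, Walk.length_cons, Walk.length_reverse]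
    omega
  obtain ⟨x, y, hx, hy, hxy, hnotin⟩ :=
    hch s0 ((Walk.cons h1 pa').append pB.reverse) hcyc hclen
  rw [Walk.mem_support_append_iff] at hx hy
  -- same-side cases give edges of the cycle
  have caseAA : ∀ x' y', G.Adj x' y' →
      x' ∈ (Walk.cons h1 pa').support → y' ∈ (Walk.cons h1 pa').support →
      s(x', y') ∈ ((Walk.cons h1 pa').append pB.reverse).edges := by
    intro x' y' hadj hx' hy'
    rw [Walk.edges_append, List.mem_append]
    exact Or.inl (Walk.min_walk_mem_edges _ hPA hminA hx' hy' hadj)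
  have caseBB : ∀ x' y', G.Adj x' y' →
      x' ∈ pB.reverse.support → y' ∈ pB.reverse.support →
      s(x', y') ∈ ((Walk.cons h1 pa').append pB.reverse).edges := by
    intro x' y' hadj hx' hy'
    rw [Walk.support_reverse, List.mem_reverse] at hx' hy'
    rw [Walk.edges_append, List.mem_append]
    right
    rw [Walk.edges_reverse, List.mem_reverse]
    exact Walk.min_walk_mem_edges _ hPB hminB hx' hy' hadj
  have caseAB : ∀ u1 u2, G.Adj u1 u2 →
      u1 ∈ (Walk.cons h1 pa').support → u2 ∈ pB.reverse.support →
      s(u1, u2) ∈ ((Walk.cons h1 pa').append pB.reverse).edges := by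
    intro u1 u2 hadj hx' hy'
    rcases hPA u1 hx' with h | h | hA
    · have hm : u1 ∈ pB.reverse.support := by
        rw [Walk.support_reverse, List.mem_reverse, h]
        exact Walk.start_mem_support pB
      exact caseBB u1 u2 hadj hm hy'
    · have hm : u1 ∈ pB.reverse.support := by
        rw [Walk.support_reverse, List.mem_reverse, h]
        exact Walk.end_mem_support pB
      exact caseBB u1 u2 hadj hm hy'
    · have hyB : u2 = s0 ∨ u2 = t0 ∨ G.Avoid ↑S b u2 := by
        apply hPB
        rwa [Walk.support_reverse, List.mem_reverse] at hy'
      rcases hyB with h | h | hB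
      · have hm : u2 ∈ (Walk.cons h1 pa').support := by
          rw [h]; exact Walk.start_mem_support _
        exact caseAA u1 u2 hadj hx' hm
      · have hm : u2 ∈ (Walk.cons h1 pa').support := by
          rw [h]; exact Walk.end_mem_support _
        exact caseAA u1 u2 hadj hx' hm
      · exact absurd (hA.step hadj hB.notMem_right) fun h => hABdisj u2 h hB
  apply hnotin
  rcases hx with hx | hx <;> rcases hy with hy | hy
  · exact caseAA x y hxy hx hy
  · exact caseAB x y hxy hx hy
  · rw [Sym2.eq_swap]
    exact caseAB y x hxy.symm hy hx
  · exact caseBB x y hxy hx hy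

universe u

lemma side_simplicial {V : Type u} {G : SimpleGraph V} {n : ℕ}
    (hIH : ∀ {W : Type u} [Fintype W] (H : SimpleGraph W), Fintype.card W ≤ n → H.IsChordal →
      (∀ x y : W, x ≠ y → H.Adj x y) ∨
      ∃ x y : W, x ≠ y ∧ ¬ H.Adj x y ∧ H.Simplicial x ∧ H.Simplicial y)
    [Fintype V] (hch : G.IsChordal) {a b : V} {S : Finset V}
    (hSa : a ∉ S) (hSb : b ∉ S) (hsep : ¬ G.Avoid ↑S a b)
    (hmin : ∀ T : Finset V, a ∉ T → b ∉ T → ¬ G.Avoid ↑T a b → S.card ≤ T.card)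
    (hcard : Fintype.card V ≤ n + 1) :
    ∃ x : V, G.Avoid ↑S a x ∧ G.Simplicial x := by
  classical
  set U : Set V := (↑S : Set V) ∪ {x | G.Avoid ↑S a x} with hU
  have haU : a ∈ U := Or.inr (Avoid.refl hSa)
  have hbU : b ∉ U := by
    rintro (h | h)
    · exact hSb h
    · exact hsep h
  have hcardU : Fintype.card ↥U ≤ n := by
    have hlt : Fintype.card ↥U < Fintype.card V := by
      apply Fintype.card_lt_of_injective_of_notMem (Subtype.val) Subtype.val_injective (b := b)
      rw [Subtype.range_coe]
      exact hbU
    omega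
  have hchU : (G.induce U).IsChordal := hch.induce U
  have hstep : ∀ x u : V, G.Avoid ↑S a x → G.Adj x u → u ∈ U := by
    intro x u hx hadj
    by_cases hu : u ∈ S
    · exact Or.inl hu
    · exact Or.inr (hx.step hadj hu)
  rcases hIH (G.induce U) hcardU hchU with hcomp | ⟨x', y', hne', hnadj', hsx, hsy⟩
  · refine ⟨a, Avoid.refl hSa, ?_⟩
    intro u w hu hw hne
    have huU : u ∈ U := hstep a u (Avoid.refl hSa) hu.symm
    have hwU : w ∈ U := hstep a w (Avoid.refl hSa) hw.symm
    exact hcomp ⟨u, huU⟩ ⟨w, hwU⟩ (by simpa [Subtype.ext_iff] using hne)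
  · have hnotboth : ¬ ((x' : V) ∈ S ∧ (y' : V) ∈ S) := by
      rintro ⟨h1, h2⟩
      exact hnadj' (sep_clique hch hSa hSb hsep hmin h1 h2 fun h => hne' (Subtype.ext h))
    have hmain : ∀ z' : ↥U, (G.induce U).Simplicial z' → (z' : V) ∉ S →
        ∃ x : V, G.Avoid ↑S a x ∧ G.Simplicial x := by
      intro z' hsz hzS
      have hzA : G.Avoid ↑S a (z' : V) := ((Set.mem_union _ _ _).mp z'.2).resolve_left hzS
      refine ⟨z', hzA, ?_⟩
      intro u w hu hw hne
      have huU : u ∈ U := hstep _ u hzA hu.symm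
      have hwU : w ∈ U := hstep _ w hzA hw.symm
      exact hsz ⟨u, huU⟩ ⟨w, hwU⟩ hu hw (by simpa [Subtype.ext_iff] using hne)
    by_cases hx'S : (x' : V) ∈ S
    · exact hmain y' hsy fun h => hnotboth ⟨hx'S, h⟩
    · exact hmain x' hsx hx'S

lemma dirac : ∀ (n : ℕ) {V : Type u} [Fintype V] (G : SimpleGraph V), Fintype.card V ≤ n →
    G.IsChordal →
    (∀ x y : V, x ≠ y → G.Adj x y) ∨
    ∃ x y : V, x ≠ y ∧ ¬ G.Adj x y ∧ G.Simplicial x ∧ G.Simplicial y := by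
  intro n
  induction n with
  | zero =>
    intro V _ G hcard hch
    left
    intro x y hne
    have hV : IsEmpty V := by
      rw [← Fintype.card_eq_zero_iff]
      omega
    exact (hV.false x).elim
  | succ n IH =>
    intro V _ G hcard hch
    classical
    by_cases hcomp : ∀ x y : V, x ≠ y → G.Adj x y
    · exact Or.inl hcomp
    right
    push_neg at hcomp
    obtain ⟨a, b, hab, hnadj⟩ := hcomp
    have hsep0 : ∃ T : Finset V, a ∉ T ∧ b ∉ T ∧ ¬ G.Avoid ↑T a b := by
      refine ⟨Finset.univ \ {a, b}, by simp, by simp, ?_⟩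
      rintro ⟨p, hp⟩
      cases p with
      | nil => exact hab rfl
      | cons h q =>
        rename_i z
        have hz : z ∉ (↑(Finset.univ \ ({a, b} : Finset V)) : Set V) :=
          hp z (by rw [Walk.support_cons]; exact List.mem_cons_of_mem _ (Walk.start_mem_support q))
        have hz' : z = a ∨ z = b := or_iff_not_imp_left.mpr (by simpa using hz)
        rcases hz' with rfl | rfl
        · exact h.ne rfl
        · exact hnadj h
    have hfind : ∃ k, ∃ T : Finset V, (a ∉ T ∧ b ∉ T ∧ ¬ G.Avoid ↑T a b) ∧ T.card = k := by
      obtain ⟨T, h1, h2, h3⟩ := hsep0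
      exact ⟨T.card, T, ⟨h1, h2, h3⟩, rfl⟩
    obtain ⟨S, ⟨hSa, hSb, hsep⟩, hScard⟩ := Nat.find_spec hfind
    have hmin : ∀ T : Finset V, a ∉ T → b ∉ T → ¬ G.Avoid ↑T a b → S.card ≤ T.card := by
      intro T h1 h2 h3
      rw [hScard]
      exact Nat.find_le ⟨T, ⟨h1, h2, h3⟩, rfl⟩
    obtain ⟨xA, hxA, hsxA⟩ := side_simplicial IH hch hSa hSb hsep hmin hcard
    have hsep2 : ¬ G.Avoid ↑S b a := fun h => hsep h.symm
    have hmin2 : ∀ T : Finset V, b ∉ T → a ∉ T → ¬ G.Avoid ↑T b a → S.card ≤ T.card :=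
      fun T h1 h2 h3 => hmin T h2 h1 fun h => h3 h.symm
    obtain ⟨xB, hxB, hsxB⟩ := side_simplicial IH hch hSb hSa hsep2 hmin2 hcard
    have hABdisj : ∀ z, G.Avoid ↑S a z → G.Avoid ↑S b z → False :=
      fun z h1 h2 => hsep (h1.trans h2.symm)
    refine ⟨xA, xB, ?_, ?_, hsxA, hsxB⟩
    · rintro rfl
      exact hABdisj xA hxA hxB
    · intro h
      exact hABdisj xB (hxA.step h hxB.notMem_right) hxB

lemma exists_peo : ∀ (n : ℕ) {V : Type u} [Fintype V] (G : SimpleGraph V), Fintype.card V ≤ n →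
    G.IsChordal →
    ∃ f : V → ℕ, Function.Injective f ∧
      ∀ v u w : V, f u < f v → f w < f v → u ≠ w → G.Adj u v → G.Adj w v → G.Adj u w := by
  intro n
  induction n with
  | zero =>
    intro V _ G hcard _
    have hV : IsEmpty V := by rw [← Fintype.card_eq_zero_iff]; omega
    exact ⟨fun _ => 0, fun x => (hV.false x).elim, fun v => (hV.false v).elim⟩
  | succ n IH =>
    intro V _ G hcard hch
    classical
    cases isEmpty_or_nonempty V with
    | inl hV => exact ⟨fun _ => 0, fun x => (hV.false x).elim, fun v => (hV.false v).elim⟩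
    | inr hV =>
      obtain ⟨x, hx⟩ : ∃ x : V, G.Simplicial x := by
        rcases dirac (Fintype.card V) G le_rfl hch with hcomp | ⟨x, y, -, -, hsx, -⟩
        · obtain ⟨x⟩ := hV
          exact ⟨x, fun u w hu hw hne => hcomp u w hne⟩
        · exact ⟨x, hsx⟩
      set U : Set V := {y | y ≠ x} with hU
      have hcardU : Fintype.card ↥U ≤ n := by
        have hlt : Fintype.card ↥U < Fintype.card V := by
          apply Fintype.card_lt_of_injective_of_notMem Subtype.val Subtype.val_injective (b := x)
          rw [Subtype.range_coe]
          simp [hU]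
        omega
      obtain ⟨f', hinj', hprop'⟩ := IH (G.induce U) hcardU (hch.induce U)
      set M : ℕ := Finset.univ.sup f' with hM
      have hfM : ∀ z : ↥U, f' z ≤ M := fun z => Finset.le_sup (Finset.mem_univ z)
      refine ⟨fun v => if h : v = x then M + 1 else f' ⟨v, h⟩, ?_, ?_⟩
      · intro v w hvw
        dsimp only at hvw
        split_ifs at hvw with hv hw hw
        · rw [hv, hw]
        · exact absurd hvw (by have := hfM ⟨w, hw⟩; omega)
        · exact absurd hvw (by have := hfM ⟨v, hv⟩; omega)
        · exact congrArg Subtype.val (hinj' hvw)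
      · intro v u w hu hw hne hadju hadjw
        dsimp only at hu hw
        by_cases hv : v = x
        · exact hx u w (hv ▸ hadju) (hv ▸ hadjw) hne
        · have hu' : u ≠ x := by
            rintro rfl
            rw [dif_pos rfl, dif_neg hv] at hu
            have := hfM ⟨v, hv⟩
            omega
          have hw' : w ≠ x := by
            rintro rfl
            rw [dif_pos rfl, dif_neg hv] at hw
            have := hfM ⟨v, hv⟩
            omega
          rw [dif_neg hu', dif_neg hv] at hu
          rw [dif_neg hw', dif_neg hv] at hw
          exact hprop' ⟨v, hv⟩ ⟨u, hu'⟩ ⟨w, hw'⟩ hu hw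
            (fun h => hne (congrArg Subtype.val h)) hadju hadjw

end SimpleGraph

namespace SimpleGraph

end SimpleGraph

namespace SimpleGraph

variable {V : Type*} {G : SimpleGraph V}

lemma cycle_from_max (f : V → ℕ) (hinj : Function.Injective f)
    (hprop : ∀ v u w : V, f u < f v → f w < f v → u ≠ w → G.Adj u v → G.Adj w v → G.Adj u w)
    {m : V} (c' : G.Walk m m) (hcyc : c'.IsCycle) (hlen : 3 < c'.length)
    (hmax : ∀ z ∈ c'.support, f z ≤ f m) :
    ∃ a b, a ∈ c'.support ∧ b ∈ c'.support ∧ G.Adj a b ∧ s(a, b) ∉ c'.edges := by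
  cases c' with
  | nil => simp at hlen
  | cons hadj p =>
    rename_i u1
    rw [Walk.cons_isCycle_iff] at hcyc
    obtain ⟨hpath, hnotmem⟩ := hcyc
    have hplen : 3 ≤ p.length := by
      rw [Walk.length_cons] at hlen; omega
    have hrev : p.reverse.IsPath := hpath.reverse
    cases hq : p.reverse with
    | nil =>
      exfalso
      have h0 : p.length = 0 := by
        have := congr_arg Walk.length hq
        simpa using this
      omega
    | cons hadj2 q =>
      rename_i w1
      rw [hq, Walk.cons_isPath_iff] at hrev
      have hqlen : q.length = p.length - 1 := by
        have := congr_arg Walk.length hq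
        rw [Walk.length_reverse, Walk.length_cons] at this
        omega
      have hu1m : u1 ≠ m := by
        rintro rfl
        have hpn := (Walk.isPath_iff_eq_nil).mp hpath
        rw [hpn] at hplen
        simp at hplen
      have hw1m : w1 ≠ m := by
        rintro rfl
        exact hrev.2 (Walk.start_mem_support q)
      have hu1w1 : u1 ≠ w1 := by
        intro h
        subst h
        have hqn := (Walk.isPath_iff_eq_nil).mp hrev.1
        rw [hqn] at hqlen
        simp at hqlen; omega
      have hu1mem : u1 ∈ p.support := Walk.start_mem_support p
      have hw1mem : w1 ∈ p.support := by
        have : w1 ∈ p.reverse.support := by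
          rw [hq, Walk.support_cons]
          exact List.mem_cons_of_mem _ (Walk.start_mem_support q)
        rwa [Walk.support_reverse, List.mem_reverse] at this
      have hmemc : ∀ z ∈ p.support, z ∈ (Walk.cons hadj p).support := by
        intro z hz
        rw [Walk.support_cons]
        exact List.mem_cons_of_mem _ hz
      have hfu : f u1 < f m :=
        lt_of_le_of_ne (hmax u1 (hmemc _ hu1mem)) fun h => hu1m (hinj h)
      have hfw : f w1 < f m :=
        lt_of_le_of_ne (hmax w1 (hmemc _ hw1mem)) fun h => hw1m (hinj h)
      have hadjuw : G.Adj u1 w1 :=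
        hprop m u1 w1 hfu hfw hu1w1 hadj.symm hadj2.symm
      refine ⟨u1, w1, hmemc _ hu1mem, hmemc _ hw1mem, hadjuw, ?_⟩
      intro hmem
      rw [Walk.edges_cons, List.mem_cons] at hmem
      rcases hmem with hmem | hmem
      · rcases Sym2.eq_iff.mp hmem with ⟨h1, -⟩ | ⟨-, h2⟩
        · exact hu1m h1
        · exact hw1m h2
      · have hmem' : s(w1, u1) ∈ p.reverse.edges := by
          rw [Walk.edges_reverse, List.mem_reverse, Sym2.eq_swap]
          exact hmem
        rw [hq, Walk.edges_cons, List.mem_cons] at hmem'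
        rcases hmem' with hmem' | hmem'
        · rcases Sym2.eq_iff.mp hmem' with ⟨h1, -⟩ | ⟨-, h2⟩
          · exact hw1m h1
          · exact hu1m h2
        · obtain ⟨ha, q2, rfl⟩ := Walk.exists_cons_of_mem_edges_fst hrev.1 hmem'
          have hq2 := (Walk.isPath_iff_eq_nil).mp hrev.1.of_cons
          rw [hq2] at hqlen
          simp [Walk.length_cons] at hqlen
          omega

lemma chordal_of_peo (f : V → ℕ) (hinj : Function.Injective f)
    (hprop : ∀ v u w : V, f u < f v → f w < f v → u ≠ w → G.Adj u v → G.Adj w v → G.Adj u w) :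
    G.IsChordal := by
  classical
  intro v c hc hlen
  obtain ⟨m, hm, hmax⟩ := Finset.exists_max_image c.support.toFinset f
    ⟨v, by simp [Walk.start_mem_support]⟩
  rw [List.mem_toFinset] at hm
  have hrot_supp : ∀ z ∈ (c.rotate m hm).support, z ∈ c.support := by
    intro z hz
    rw [Walk.support_eq_cons, List.mem_cons] at hz
    rcases hz with rfl | hz
    · exact hm
    · have := (Walk.support_rotate c m hm).mem_iff.mp hz
      rw [Walk.support_eq_cons]
      exact List.mem_cons_of_mem _ this
  have hrot_edges := Walk.rotate_edges c m hm
  obtain ⟨a, b, ha, hb, hab, hne⟩ := cycle_from_max f hinj hprop (c.rotate m hm)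
    (hc.rotate hm) (by rwa [Walk.length_rotate])
    (fun z hz => hmax z (List.mem_toFinset.mpr (hrot_supp z hz)))
  exact ⟨a, b, hrot_supp _ ha, hrot_supp _ hb, hab,
    fun hmem => hne (hrot_edges.mem_iff.mpr hmem)⟩

end SimpleGraph

theorem stmt_0 {V : Type*} [Fintype V] (G : SimpleGraph V) :
    (∃ f : V → ℕ, Function.Injective f ∧
        ∀ v u w : V, f u < f v → f w < f v → u ≠ w → G.Adj u v → G.Adj w v → G.Adj u w)
      ↔ G.IsChordal := by
  constructor
  · rintro ⟨f, hinj, hprop⟩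
    exact SimpleGraph.chordal_of_peo f hinj hprop
  · intro h
    exact SimpleGraph.exists_peo (Fintype.card V) G le_rfl h
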